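/- For every n ∈ ℕ and all real numbers a, b, c, y one has S_n(y; a, b, c) = S_n(y; b, a, c); consequently S_n(y; a, b, c) is invariant under every permutation of the parameters (a, b, c) (symmetry in (b, c) being immediate from the definition). This is the statement, proved via Kummer's transformation, that the continuous dual Hahn polynomials are symmetric in a, b and c. -/
import Mathlib


open Finset

/-- Pochhammer symbol `(q)_m = q(q+1)⋯(q+m−1)` for a real `q`. -/
noncomputable def poch (q : ℝ) (m : ℕ) : ℝ := ∏ l ∈ Finset.range m, (q + l)

/-- The continuous dual Hahn polynomial
`S_n(y; a, b, c) = ∑_{j=0}^n (−1)^j (n choose j) (a+b+j)_{n−j} (a+c+j)_{n−j}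
  ∏_{l=0}^{j−1} ((a+l)² + y)`. -/
noncomputable def cdHahn (n : ℕ) (y a b c : ℝ) : ℝ :=
  ∑ j ∈ Finset.range (n + 1),
    (-1 : ℝ) ^ j * (n.choose j : ℝ) * poch (a + b + j) (n - j) * poch (a + c + j) (n - j) *
      ∏ l ∈ Finset.range j, ((a + l) ^ 2 + y)

lemma poch_succ (q : ℝ) (m : ℕ) : poch q (m+1) = poch q m * (q + m) := by
  simp [poch, Finset.prod_range_succ]

lemma poch_succ' (q : ℝ) (m : ℕ) : poch q (m+1) = q * poch (q+1) m := by
  rw [poch, Finset.prod_range_succ']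
  simp only [Nat.cast_zero, add_zero]
  rw [mul_comm, poch]
  congr 1
  refine Finset.prod_congr rfl fun l _ => ?_
  push_cast; ring

lemma poch_shift (q : ℝ) (m : ℕ) : poch q m * (q + m) = q * poch (q+1) m := by
  rw [← poch_succ, poch_succ']

lemma poch_sub (q : ℝ) (m : ℕ) :
    poch (q+1) m - poch q m = m * poch (q+1) (m-1) := by
  cases m with
  | zero => simp [poch]
  | succ k =>
    simp only [Nat.add_sub_cancel]
    rw [poch_succ, poch_succ']
    push_cast
    ring

lemma shiftA (m : ℕ) (a b c y : ℝ) :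
    (a^2+y) * cdHahn m y (a+1) b c =
      ∑ j ∈ Finset.range (m+1),
        (-1:ℝ)^j * (m.choose j : ℝ) * poch (a+b+1+j) (m-j) * poch (a+c+1+j) (m-j) *
          ∏ l ∈ Finset.range (j+1), ((a+l)^2+y) := by
  rw [cdHahn, Finset.mul_sum]
  refine Finset.sum_congr rfl fun j _ => ?_
  rw [Finset.prod_range_succ']
  have h1 : (a+1)+b+(j:ℝ) = a+b+1+j := by ring
  have h2 : (a+1)+c+(j:ℝ) = a+c+1+j := by ring
  rw [h1, h2]
  have h3 : (∏ l ∈ Finset.range j, ((((a+1):ℝ)+l)^2+y)) = ∏ l ∈ Finset.range j, ((a+((l+1:ℕ):ℝ))^2+y) := by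
    refine Finset.prod_congr rfl fun l _ => ?_
    push_cast; ring
  rw [h3]
  push_cast
  ring

lemma rec1 (n : ℕ) (a b c y : ℝ) :
    cdHahn (n+1) y a b c
      = (a+b+n)*(a+c+n) * cdHahn n y a b c - (a^2+y) * cdHahn n y (a+1) b c := by
  have hX : (a+b+n)*(a+c+n) * cdHahn n y a b c
      = ∑ j ∈ Finset.range (n+1),
          (-1:ℝ)^j * (n.choose j : ℝ) * poch (a+b+j) (n+1-j) * poch (a+c+j) (n+1-j) *
            ∏ l ∈ Finset.range j, ((a+l)^2+y) := by
    rw [cdHahn, Finset.mul_sum]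
    refine Finset.sum_congr rfl fun j hj => ?_
    have hj' : j ≤ n := Nat.lt_succ_iff.mp (Finset.mem_range.mp hj)
    have e1 : n+1-j = (n-j)+1 := by omega
    rw [e1, poch_succ, poch_succ, Nat.cast_sub hj']
    ring
  rw [hX, shiftA]
  set P : ℕ → ℝ := fun j => ∏ l ∈ Finset.range j, ((a+l)^2+y) with hP
  set f : ℕ → ℝ := fun j => (-1:ℝ)^j * ((n+1).choose j : ℝ) * poch (a+b+j) (n+1-j) * poch (a+c+j) (n+1-j) * P j with hf
  set g : ℕ → ℝ := fun j => (-1:ℝ)^j * (n.choose j : ℝ) * poch (a+b+j) (n+1-j) * poch (a+c+j) (n+1-j) * P j with hg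
  set s : ℕ → ℝ := fun j => (-1:ℝ)^j * (n.choose j : ℝ) * poch (a+b+1+j) (n-j) * poch (a+c+1+j) (n-j) * P (j+1) with hs
  have hL : cdHahn (n+1) y a b c = ∑ j ∈ Finset.range (n+1+1), f j := rfl
  rw [hL, Finset.sum_range_succ' f (n+1)]
  have h1 := Finset.sum_range_succ g (n+1)
  have h2 := Finset.sum_range_succ' g (n+1)
  have hgtop : g (n+1) = 0 := by
    simp [hg, Nat.choose_succ_self]
  have hf0 : f 0 = g 0 := by simp [hf, hg]
  have hsplit : ∀ k ∈ Finset.range (n+1), f (k+1) = g (k+1) - s k := by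
    intro k hk
    simp only [hf, hg, hs, Nat.succ_sub_succ_eq_sub, Nat.choose_succ_succ]
    have e1 : a+b+((k:ℝ)+1) = a+b+1+k := by ring
    have e2 : a+c+((k:ℝ)+1) = a+c+1+k := by ring
    push_cast
    rw [e1, e2]
    ring
  rw [Finset.sum_congr rfl hsplit, Finset.sum_sub_distrib, hf0]
  linear_combination h1 - h2 + hgtop

lemma keyL (m : ℕ) (a b c y : ℝ) :
    (a^2+y) * cdHahn m y (a+1) b c - (b^2+y) * cdHahn m y a (b+1) c
      = (a-b) * (a+b+m) * cdHahn m y a b c := by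
  set P : ℕ → ℝ := fun j => ∏ l ∈ Finset.range j, ((a+l)^2+y) with hP
  set sA : ℕ → ℝ := fun j => (-1:ℝ)^j * (m.choose j : ℝ) * poch (a+b+1+j) (m-j) * poch (a+c+1+j) (m-j) * P (j+1) with hsA
  set sB1 : ℕ → ℝ := fun j => (-1:ℝ)^j * (m.choose j : ℝ) * poch (a+b+1+j) (m-j) * poch (a+c+j) (m-j) * P (j+1) with hsB1
  set sB2 : ℕ → ℝ := fun j => (-1:ℝ)^j * (m.choose j : ℝ) * poch (a+b+1+j) (m-j) * poch (a+c+j) (m-j) * ((a+j)^2 - b^2) * P j with hsB2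
  set sC : ℕ → ℝ := fun j => (a-b) * (a+b+j) * ((-1:ℝ)^j * (m.choose j : ℝ)) * poch (a+b+1+j) (m-j) * poch (a+c+j) (m-j) * P j with hsC
  set h : ℕ → ℝ := fun i => (-1:ℝ)^i * ((m.choose i * i : ℕ) : ℝ) * poch (a+b+i) (m+1-i) * poch (a+c+i) (m-i) * P i with hh
  have hA : (a^2+y) * cdHahn m y (a+1) b c = ∑ j ∈ Finset.range (m+1), sA j := shiftA m a b c y
  have hB : (b^2+y) * cdHahn m y a (b+1) c
      = (∑ j ∈ Finset.range (m+1), sB1 j) - ∑ j ∈ Finset.range (m+1), sB2 j := by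
    rw [cdHahn, Finset.mul_sum, ← Finset.sum_sub_distrib]
    refine Finset.sum_congr rfl fun j hj => ?_
    simp only [hsB1, hsB2, hP]
    have e1 : a+(b+1)+(j:ℝ) = a+b+1+j := by ring
    rw [e1, Finset.prod_range_succ]
    ring
  have hC : (a-b) * (a+b+m) * cdHahn m y a b c = ∑ j ∈ Finset.range (m+1), sC j := by
    rw [cdHahn, Finset.mul_sum]
    refine Finset.sum_congr rfl fun j hj => ?_
    have hj' : j ≤ m := Nat.lt_succ_iff.mp (Finset.mem_range.mp hj)
    simp only [hsC, hP]
    have e2 := poch_shift (a+b+j) (m-j)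
    have e1 : (a+b+(j:ℝ)) + ((m-j:ℕ):ℝ) = a+b+m := by rw [Nat.cast_sub hj']; ring
    rw [e1] at e2
    have e3 : (a+b+(j:ℝ))+1 = a+b+1+j := by ring
    rw [e3] at e2
    linear_combination (a-b) * ((-1:ℝ)^j * (m.choose j:ℝ)) * poch (a+c+j) (m-j) * P j * e2
  have hAB : ∀ j ∈ Finset.range (m+1), sA j - sB1 j = - h (j+1) := by
    intro j hj
    simp only [hsA, hsB1, hh]
    have e0 := poch_sub (a+c+j) (m-j)
    have e3 : (a+c+(j:ℝ))+1 = a+c+1+j := by ring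
    rw [e3] at e0
    have n1 : m+1-(j+1) = m-j := by omega
    have n2 : m-(j+1) = (m-j)-1 := by omega
    have n3 : (m.choose (j+1) * (j+1)) = m.choose j * (m-j) := Nat.choose_succ_right_eq m j
    rw [n1, n2, n3]
    have e4 : a+b+((j:ℝ)+1) = a+b+1+j := by ring
    have e5 : a+c+((j:ℝ)+1) = a+c+1+j := by ring
    push_cast
    rw [e4, e5]
    linear_combination ((-1:ℝ)^j * (m.choose j:ℝ) * poch (a+b+1+j) (m-j) * P (j+1)) * e0
  have hH1 := Finset.sum_range_succ' h (m+1)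
  have hH2 := Finset.sum_range_succ h (m+1)
  have hh0 : h 0 = 0 := by simp [hh]
  have hhtop : h (m+1) = 0 := by simp [hh, Nat.choose_succ_self]
  have hterm : ∀ j ∈ Finset.range (m+1), sB2 j - sC j = h j := by
    intro j hj
    have hj' : j ≤ m := Nat.lt_succ_iff.mp (Finset.mem_range.mp hj)
    simp only [hsB2, hsC, hh]
    have n1 : m+1-j = (m-j)+1 := by omega
    rw [n1, poch_succ']
    have e3 : (a+b+(j:ℝ))+1 = a+b+1+j := by ring
    rw [e3]
    push_cast
    ring
  rw [hA, hB, hC]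
  have S1 : (∑ j ∈ Finset.range (m+1), sA j) - (∑ j ∈ Finset.range (m+1), sB1 j)
      = - ∑ j ∈ Finset.range (m+1), h j := by
    rw [← Finset.sum_sub_distrib, Finset.sum_congr rfl hAB, Finset.sum_neg_distrib]
    have : ∑ j ∈ Finset.range (m+1), h (j+1) = ∑ j ∈ Finset.range (m+1), h j := by
      linear_combination hH2 - hH1 + hhtop - hh0
    rw [this]
  have S2 : (∑ j ∈ Finset.range (m+1), sB2 j) - (∑ j ∈ Finset.range (m+1), sC j)
      = ∑ j ∈ Finset.range (m+1), h j := by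
    rw [← Finset.sum_sub_distrib]; exact Finset.sum_congr rfl hterm
  linear_combination S1 + S2

lemma cdHahn_swap_ab (n : ℕ) : ∀ a b c y : ℝ, cdHahn n y a b c = cdHahn n y b a c := by
  induction n with
  | zero => intro a b c y; simp [cdHahn, poch]
  | succ n ih =>
    intro a b c y
    rw [rec1 n a b c y, rec1 n b a c y]
    linear_combination (-1 : ℝ) * keyL n a b c y + (a+b+(n:ℝ))*(b+c+n) * ih a b c y
      + (b^2+y) * ih (b+1) a c y

lemma cdHahn_swap_bc (n : ℕ) (a b c y : ℝ) : cdHahn n y a b c = cdHahn n y a c b := by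
  rw [cdHahn, cdHahn]
  exact Finset.sum_congr rfl fun j _ => by ring

/-- The continuous dual Hahn polynomials are symmetric in the parameters `a`, `b`, `c`:
`S_n(y; a, b, c) = S_n(y; b, a, c)` and (immediately from the definition)
`S_n(y; a, b, c) = S_n(y; a, c, b)`; together these give invariance under every
permutation of `(a, b, c)`. -/
theorem cdHahn_symm (n : ℕ) (a b c y : ℝ) :
    cdHahn n y a b c = cdHahn n y b a c ∧ cdHahn n y a b c = cdHahn n y a c b := by
  exact ⟨cdHahn_swap_ab n a b c y, cdHahn_swap_bc n a b c y⟩
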